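/- Let c be a cost vector of nonnegative reals, let t ≥ 1 be an integer, and let G be a simple graph. Let V₀ and V₁ be sets of pairwise clones in G such that V₀ ∪ V₁ is an independent set of G and V₀, V₁ are disjoint. Then π*_t(G, c) ≤ max{ π*_t(G(V₀→V₁), c), π*_t(G(V₁→V₀), c) }. -/

import Mathlib

open scoped Classical
open Finset

/-- `K` is a clique of `G`: a nonempty set of pairwise adjacent vertices. -/
def IsCliqueOf {V : Type} [Fintype V] [DecidableEq V] (G : SimpleGraph V) (K : Finset V) : Prop :=
  K.Nonempty ∧ G.IsClique (K : Set V)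

/-- Total `c`-cost of a weighting `f` of the finsets of vertices. -/
noncomputable def cliqueCost {V : Type} [Fintype V] [DecidableEq V]
    (c : ℕ → ℝ) (f : Finset V → ℝ) : ℝ :=
  ∑ K : Finset V, c K.card * f K

/-- `f` is a fractional `t`-clique cover of `G`. -/
def IsFracCover {V : Type} [Fintype V] [DecidableEq V]
    (t : ℕ) (G : SimpleGraph V) (f : Finset V → ℝ) : Prop :=
  (∀ K, 0 ≤ f K) ∧ (∀ K, ¬ IsCliqueOf G K → f K = 0) ∧
  ∀ T : Finset V, T.card = t → G.IsClique (T : Set V) →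
    1 ≤ ∑ K ∈ Finset.univ.filter (fun K => T ⊆ K), f K

/-- `f` is a fractional `t`-clique decomposition of `G`. -/
def IsFracDecomp {V : Type} [Fintype V] [DecidableEq V]
    (t : ℕ) (G : SimpleGraph V) (f : Finset V → ℝ) : Prop :=
  (∀ K, 0 ≤ f K) ∧ (∀ K, ¬ IsCliqueOf G K → f K = 0) ∧
  ∀ T : Finset V, T.card = t → G.IsClique (T : Set V) →
    ∑ K ∈ Finset.univ.filter (fun K => T ⊆ K), f K = 1

/-- `f` is an integer (`{0,1}`-valued) `t`-clique cover of `G`. -/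
def IsIntCover {V : Type} [Fintype V] [DecidableEq V]
    (t : ℕ) (G : SimpleGraph V) (f : Finset V → ℝ) : Prop :=
  IsFracCover t G f ∧ ∀ K, f K = 0 ∨ f K = 1

/-- `f` is an integer (`{0,1}`-valued) `t`-clique decomposition of `G`. -/
def IsIntDecomp {V : Type} [Fintype V] [DecidableEq V]
    (t : ℕ) (G : SimpleGraph V) (f : Finset V → ℝ) : Prop :=
  IsFracDecomp t G f ∧ ∀ K, f K = 0 ∨ f K = 1

/-- θ*_t(G,c): minimum total c-cost of a fractional t-clique cover. -/
noncomputable def thetaFrac {V : Type} [Fintype V] [DecidableEq V]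
    (t : ℕ) (G : SimpleGraph V) (c : ℕ → ℝ) : ℝ :=
  sInf { x | ∃ f, IsFracCover t G f ∧ x = cliqueCost c f }

/-- θ_t(G,c): minimum total c-cost of an integer t-clique cover. -/
noncomputable def thetaInt {V : Type} [Fintype V] [DecidableEq V]
    (t : ℕ) (G : SimpleGraph V) (c : ℕ → ℝ) : ℝ :=
  sInf { x | ∃ f, IsIntCover t G f ∧ x = cliqueCost c f }

/-- π*_t(G,c): minimum total c-cost of a fractional t-clique decomposition. -/
noncomputable def piFrac {V : Type} [Fintype V] [DecidableEq V]
    (t : ℕ) (G : SimpleGraph V) (c : ℕ → ℝ) : ℝ :=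
  sInf { x | ∃ f, IsFracDecomp t G f ∧ x = cliqueCost c f }

/-- π_t(G,c): minimum total c-cost of an integer t-clique decomposition. -/
noncomputable def piInt {V : Type} [Fintype V] [DecidableEq V]
    (t : ℕ) (G : SimpleGraph V) (c : ℕ → ℝ) : ℝ :=
  sInf { x | ∃ f, IsIntDecomp t G f ∧ x = cliqueCost c f }

/-- `G` is complete multipartite: vertices can be assigned to parts so that
adjacency holds exactly between distinct parts. -/
def IsCompleteMultipartite {V : Type} [Fintype V] [DecidableEq V]
    (G : SimpleGraph V) : Prop :=
  ∃ p : V → ℕ, ∀ u v, G.Adj u v ↔ p u ≠ p v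

/-- `U` is a (nonempty) set of pairwise clones: all vertices of `U` have the
same neighborhood in `G`. -/
def IsCloneSet {V : Type} [Fintype V] [DecidableEq V] (G : SimpleGraph V) (U : Set V) : Prop :=
  U.Nonempty ∧ ∀ u ∈ U, ∀ v ∈ U, G.neighborSet u = G.neighborSet v

/-- `G(V₀ → V₁)`: symmetrize `V₀` to `V₁`.  Edges inside the complement of
`V₀ ∪ V₁` are kept, and every vertex of `V₀ ∪ V₁` is joined exactly to the
common neighborhood of the vertices of `V₁`. -/
def symmetrize {V : Type} [Fintype V] [DecidableEq V]
    (G : SimpleGraph V) (V₀ V₁ : Set V) : SimpleGraph V where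
  Adj x y :=
    (x ∉ V₀ ∪ V₁ ∧ y ∉ V₀ ∪ V₁ ∧ G.Adj x y) ∨
    (x ∈ V₀ ∪ V₁ ∧ y ∉ V₀ ∪ V₁ ∧ ∃ z ∈ V₁, G.Adj z y) ∨
    (y ∈ V₀ ∪ V₁ ∧ x ∉ V₀ ∪ V₁ ∧ ∃ z ∈ V₁, G.Adj z x)
  symm := by
    constructor
    rintro x y (⟨hx, hy, h⟩ | ⟨hx, hy, h⟩ | ⟨hy, hx, h⟩)
    · exact Or.inl ⟨hy, hx, h.symm⟩
    · exact Or.inr (Or.inr ⟨hx, hy, h⟩)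
    · exact Or.inr (Or.inl ⟨hy, hx, h⟩)
  loopless := by
    constructor
    rintro x (⟨hx, hy, h⟩ | ⟨hx, hy, h⟩ | ⟨hy, hx, h⟩)
    · exact G.irrefl h
    · exact hy hx
    · exact hx hy

section AuxSums

variable {V : Type} [Fintype V] [DecidableEq V]

lemma aux_insert_inter {Us C : Finset V} {u : V} (hu : u ∈ Us) (hC : C ∩ Us = ∅) :
    (insert u C) ∩ Us = {u} := by
  ext x
  simp only [mem_inter, mem_insert, mem_singleton]
  constructor
  · rintro ⟨hx | hx, hxU⟩
    · exact hx
    · exact absurd (mem_inter.mpr ⟨hx, hxU⟩) (by simp [hC])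
  · rintro rfl
    exact ⟨Or.inl rfl, hu⟩

lemma aux_insert_sdiff {Us C : Finset V} {u : V} (hu : u ∈ Us) (hC : C ∩ Us = ∅) :
    (insert u C) \ Us = C := by
  rw [Finset.insert_sdiff_of_mem _ hu]
  rwa [Finset.sdiff_eq_self_iff_disjoint, Finset.disjoint_iff_inter_eq_empty]

lemma aux_insert_back {Us K : Finset V} {u : V} (hK : K ∩ Us = {u}) :
    insert u (K \ Us) = K := by
  have hu : u ∈ K ∧ u ∈ Us := by
    have : u ∈ K ∩ Us := hK ▸ mem_singleton_self u
    exact mem_inter.mp this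
  ext x
  simp only [mem_insert, mem_sdiff]
  constructor
  · rintro (rfl | ⟨hx, _⟩)
    · exact hu.1
    · exact hx
  · intro hx
    by_cases hxU : x ∈ Us
    · left
      have : x ∈ K ∩ Us := mem_inter.mpr ⟨hx, hxU⟩
      rw [hK] at this
      exact mem_singleton.mp this
    · exact Or.inr ⟨hx, hxU⟩

/-- Reindex the sum over supersets of `T` with singleton `Us`-intersection `{u}`. -/
lemma sum_singleton_fiber (Us : Finset V) (g : Finset V → ℝ) {u : V} (hu : u ∈ Us)
    (T : Finset V) (hT : T ∩ Us = ∅) :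
    ∑ K ∈ univ.filter (fun K => T ⊆ K ∧ K ∩ Us = {u}), g K
      = ∑ C ∈ univ.filter (fun C => T ⊆ C ∧ C ∩ Us = ∅), g (insert u C) := by
  have hTU : ∀ x ∈ T, x ∉ Us := by
    intro x hx hxU
    exact absurd (mem_inter.mpr ⟨hx, hxU⟩) (by simp [hT])
  refine Finset.sum_nbij' (i := fun K => K \ Us) (j := fun C => insert u C) ?_ ?_ ?_ ?_ ?_
  · intro K hK
    simp only [mem_filter, mem_univ, true_and] at hK ⊢
    exact ⟨fun x hx => mem_sdiff.mpr ⟨hK.1 hx, hTU x hx⟩, Finset.sdiff_inter_self _ _⟩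
  · intro C hC
    simp only [mem_filter, mem_univ, true_and] at hC ⊢
    exact ⟨hC.1.trans (subset_insert u C), aux_insert_inter hu hC.2⟩
  · intro K hK
    simp only [mem_filter, mem_univ, true_and] at hK
    exact aux_insert_back hK.2
  · intro C hC
    simp only [mem_filter, mem_univ, true_and] at hC
    exact aux_insert_sdiff hu hC.2
  · intro K hK
    simp only [mem_filter, mem_univ, true_and] at hK
    rw [aux_insert_back hK.2]

/-- Split a sum over supersets of `T` according to the intersection with `Us`,
assuming `g` vanishes when the intersection has at least two elements. -/
lemma sum_split (Us : Finset V) (g : Finset V → ℝ)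
    (hg : ∀ K : Finset V, 2 ≤ (K ∩ Us).card → g K = 0)
    (T : Finset V) (hT : T ∩ Us = ∅) :
    ∑ K ∈ univ.filter (fun K => T ⊆ K), g K =
      ∑ K ∈ univ.filter (fun K => T ⊆ K ∧ K ∩ Us = ∅), g K
      + ∑ u ∈ Us, ∑ C ∈ univ.filter (fun C => T ⊆ C ∧ C ∩ Us = ∅), g (insert u C) := by
  have h1 : ∑ K ∈ univ.filter (fun K => T ⊆ K), g K
      = ∑ K ∈ univ.filter (fun K => T ⊆ K ∧ K ∩ Us = ∅), g K
        + ∑ K ∈ univ.filter (fun K => T ⊆ K ∧ ¬ (K ∩ Us = ∅)), g K := by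
    rw [← Finset.sum_filter_add_sum_filter_not (univ.filter (fun K => T ⊆ K))
      (fun K => K ∩ Us = ∅) g, Finset.filter_filter, Finset.filter_filter]
  rw [h1]
  congr 1
  have h2 : ∑ K ∈ univ.filter (fun K => T ⊆ K ∧ ¬ (K ∩ Us = ∅)), g K
      = ∑ K ∈ univ.filter (fun K => T ⊆ K ∧ ¬ (K ∩ Us = ∅)), ∑ u ∈ Us,
          (if K ∩ Us = {u} then g K else 0) := by
    refine Finset.sum_congr rfl ?_
    intro K hK
    simp only [mem_filter, mem_univ, true_and] at hK
    by_cases hex : ∃ u₀ ∈ Us, K ∩ Us = {u₀}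
    · obtain ⟨u₀, hu₀, hKu₀⟩ := hex
      rw [Finset.sum_eq_single u₀]
      · rw [if_pos hKu₀]
      · intro u hu hne
        rw [if_neg]
        intro h
        exact hne (by rw [hKu₀] at h; exact (Finset.singleton_inj.mp h).symm)
      · intro h; exact absurd hu₀ h
    · have : g K = 0 := by
        apply hg
        rcases Nat.lt_or_ge (K ∩ Us).card 2 with h2 | h2
        · exfalso
          interval_cases h : (K ∩ Us).card
          · exact hK.2 (Finset.card_eq_zero.mp h)
          · obtain ⟨u₀, hu₀⟩ := Finset.card_eq_one.mp h
            have huUs : u₀ ∈ Us := by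
              have : u₀ ∈ K ∩ Us := hu₀ ▸ mem_singleton_self u₀
              exact (mem_inter.mp this).2
            exact hex ⟨u₀, huUs, hu₀⟩
        · exact h2
      rw [this]
      refine (Finset.sum_eq_zero ?_).symm
      intro u hu
      simp [this]
  rw [h2, Finset.sum_comm]
  refine Finset.sum_congr rfl fun u hu => ?_
  rw [← Finset.sum_filter, Finset.filter_filter]
  have hfe : (univ.filter fun a => (T ⊆ a ∧ ¬a ∩ Us = ∅) ∧ a ∩ Us = {u})
      = univ.filter fun K => T ⊆ K ∧ K ∩ Us = {u} := by
    apply Finset.filter_congr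
    intro K _
    constructor
    · rintro ⟨⟨h1, _⟩, h3⟩; exact ⟨h1, h3⟩
    · rintro ⟨h1, h3⟩; exact ⟨⟨h1, by simp [h3]⟩, h3⟩
  rw [hfe, sum_singleton_fiber Us g hu T hT]

end AuxSums
section AuxGraph

variable {n : ℕ} {G : SimpleGraph (Fin n)} {A B : Set (Fin n)}

lemma symm_adj_out {x y : Fin n} (hx : x ∉ A ∪ B) (hy : y ∉ A ∪ B) :
    (symmetrize G A B).Adj x y ↔ G.Adj x y := by
  show (_ ∨ _ ∨ _) ↔ _
  constructor
  · rintro (⟨_, _, h⟩ | ⟨h, _, _⟩ | ⟨h, _, _⟩)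
    · exact h
    · exact absurd h hx
    · exact absurd h hy
  · intro h
    exact Or.inl ⟨hx, hy, h⟩

lemma symm_adj_mid (hB : IsCloneSet G B) {u y v : Fin n} (hu : u ∈ A ∪ B) (hv : v ∈ B) :
    (symmetrize G A B).Adj u y ↔ (y ∉ A ∪ B ∧ G.Adj v y) := by
  have hclone : ∀ z ∈ B, (G.Adj z y ↔ G.Adj v y) := by
    intro z hz
    have := hB.2 z hz v hv
    constructor
    · intro h
      have : y ∈ G.neighborSet v := by rw [← this]; exact h
      exact this
    · intro h
      have : y ∈ G.neighborSet z := by rw [this]; exact h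
      exact this
  show (_ ∨ _ ∨ _) ↔ _
  constructor
  · rintro (⟨h, _, _⟩ | ⟨_, hy, z, hz, h⟩ | ⟨_, h, _⟩)
    · exact absurd hu h
    · exact ⟨hy, (hclone z hz).mp h⟩
    · exact absurd hu h
  · rintro ⟨hy, h⟩
    exact Or.inr (Or.inl ⟨hu, hy, v, hv, h⟩)

lemma symm_adj_two {u u' : Fin n} (hu : u ∈ A ∪ B) (hu' : u' ∈ A ∪ B) :
    ¬ (symmetrize G A B).Adj u u' := by
  rintro (⟨h, _, _⟩ | ⟨_, h, _⟩ | ⟨_, h, _⟩)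
  · exact h hu
  · exact h hu'
  · exact h hu

lemma clique_out {C : Finset (Fin n)} (hC : ∀ x ∈ C, x ∉ A ∪ B) :
    (symmetrize G A B).IsClique (C : Set (Fin n)) ↔ G.IsClique (C : Set (Fin n)) := by
  constructor <;> intro h x hx y hy hxy
  · exact (symm_adj_out (hC x hx) (hC y hy)).mp (h hx hy hxy)
  · exact (symm_adj_out (hC x hx) (hC y hy)).mpr (h hx hy hxy)

lemma clique_insert (hB : IsCloneSet G B) {u v : Fin n} {C : Finset (Fin n)}
    (hu : u ∈ A ∪ B) (hv : v ∈ B) (hC : ∀ x ∈ C, x ∉ A ∪ B) :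
    (symmetrize G A B).IsClique (↑(insert u C) : Set (Fin n))
      ↔ G.IsClique (↑(insert v C) : Set (Fin n)) := by
  rw [Finset.coe_insert, Finset.coe_insert, SimpleGraph.isClique_insert,
    SimpleGraph.isClique_insert, clique_out hC]
  constructor
  · rintro ⟨h1, h2⟩
    refine ⟨h1, fun y hy _ => ?_⟩
    have hy' : y ∈ C := by exact_mod_cast hy
    have := h2 y hy (fun h => hC y hy' (h ▸ hu))
    exact ((symm_adj_mid hB hu hv).mp this).2
  · rintro ⟨h1, h2⟩
    refine ⟨h1, fun y hy _ => ?_⟩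
    have hy' : y ∈ C := by exact_mod_cast hy
    refine (symm_adj_mid hB hu hv).mpr ⟨hC y hy', ?_⟩
    exact h2 y hy (fun h => hC y hy' (h ▸ Set.mem_union_right A hv))

/-- Any fractional decomposition of a symmetrized graph vanishes on sets
meeting `A ∪ B` in at least two vertices. -/
lemma decomp_vanish_two {t : ℕ} {g : Finset (Fin n) → ℝ}
    (hg : IsFracDecomp t (symmetrize G A B) g) {Us : Finset (Fin n)}
    (hUs : ∀ x, x ∈ Us ↔ x ∈ A ∪ B) (K : Finset (Fin n)) (h2 : 2 ≤ (K ∩ Us).card) :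
    g K = 0 := by
  obtain ⟨u, hu, u', hu', hne⟩ := Finset.one_lt_card.mp h2
  apply hg.2.1
  rintro ⟨-, hcl⟩
  have hu1 := Finset.mem_inter.mp hu
  have hu2 := Finset.mem_inter.mp hu'
  exact symm_adj_two ((hUs u).mp hu1.2) ((hUs u').mp hu2.2)
    (hcl (by exact_mod_cast hu1.1) (by exact_mod_cast hu2.1) hne)

/-- A clique of `G` meets the independent set `A ∪ B` in at most one vertex. -/
lemma G_clique_inter_card {T : Finset (Fin n)}
    (hind : ∀ u ∈ A ∪ B, ∀ v ∈ A ∪ B, ¬ G.Adj u v)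
    (hT : G.IsClique (T : Set (Fin n))) {Us : Finset (Fin n)}
    (hUs : ∀ x, x ∈ Us ↔ x ∈ A ∪ B) : (T ∩ Us).card ≤ 1 := by
  rw [Finset.card_le_one]
  intro a ha b hb
  by_contra hne
  have ha' := Finset.mem_inter.mp ha
  have hb' := Finset.mem_inter.mp hb
  exact hind a ((hUs a).mp ha'.2) b ((hUs b).mp hb'.2)
    (hT (by exact_mod_cast ha'.1) (by exact_mod_cast hb'.1) hne)

end AuxGraph
section AuxDecomp

lemma exists_decomp {V : Type} [Fintype V] [DecidableEq V] (t : ℕ) (ht : 1 ≤ t)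
    (G : SimpleGraph V) : ∃ f, IsFracDecomp t G f := by
  refine ⟨fun K => if IsCliqueOf G K ∧ K.card = t then 1 else 0, fun K => ?_, fun K hK => ?_, ?_⟩
  · dsimp only; split <;> norm_num
  · dsimp only; rw [if_neg]; rintro ⟨h, -⟩; exact hK h
  · intro T hTc hTcl
    rw [Finset.sum_eq_single T]
    · rw [if_pos ⟨⟨Finset.card_pos.mp (by omega), hTcl⟩, hTc⟩]
    · intro K hK hne
      simp only [Finset.mem_filter, Finset.mem_univ, true_and] at hK
      rw [if_neg]
      rintro ⟨-, hKc⟩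
      exact hne (Finset.eq_of_subset_of_card_le hK (by omega)).symm
    · intro h
      exact absurd (Finset.mem_filter.mpr ⟨Finset.mem_univ T, Finset.Subset.refl T⟩) h

lemma decomp_cost_nonneg {V : Type} [Fintype V] [DecidableEq V] {t : ℕ} {G : SimpleGraph V}
    {c : ℕ → ℝ} (hc : ∀ i, 1 ≤ i → 0 ≤ c i) {f : Finset V → ℝ} (hf : IsFracDecomp t G f) :
    0 ≤ cliqueCost c f := by
  apply Finset.sum_nonneg
  intro K _
  rcases eq_or_ne K ∅ with rfl | hne
  · rw [hf.2.1 ∅ (by rintro ⟨⟨x, hx⟩, -⟩; exact absurd hx (Finset.notMem_empty x)), mul_zero]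
  · exact mul_nonneg (hc _ (Finset.card_pos.mpr (Finset.nonempty_iff_ne_empty.mpr hne))) (hf.1 K)

variable {n : ℕ} {G : SimpleGraph (Fin n)} {A B : Set (Fin n)}

lemma empty_case_sum {t : ℕ} {g : Finset (Fin n) → ℝ}
    (hg : IsFracDecomp t (symmetrize G A B) g)
    {Us : Finset (Fin n)} (hUs : ∀ x, x ∈ Us ↔ x ∈ A ∪ B)
    {T : Finset (Fin n)} (hTc : T.card = t) (hTcl : G.IsClique (T : Set (Fin n)))
    (hT : T ∩ Us = ∅) :
    ∑ K ∈ univ.filter (fun K => T ⊆ K ∧ K ∩ Us = ∅), g K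
      + ∑ u ∈ Us, ∑ C ∈ univ.filter (fun C => T ⊆ C ∧ C ∩ Us = ∅), g (insert u C) = 1 := by
  rw [← sum_split Us g (decomp_vanish_two hg hUs) T hT]
  apply hg.2.2 T hTc
  have hTmem : ∀ x ∈ T, x ∉ A ∪ B := by
    intro x hx hxU
    have : x ∈ T ∩ Us := Finset.mem_inter.mpr ⟨hx, (hUs x).mpr hxU⟩
    rw [hT] at this
    exact absurd this (Finset.notMem_empty x)
  exact (clique_out hTmem).mpr hTcl

lemma single_case_sum (hB : IsCloneSet G B) {t : ℕ} {g : Finset (Fin n) → ℝ}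
    (hg : IsFracDecomp t (symmetrize G A B) g)
    {Us : Finset (Fin n)} (hUs : ∀ x, x ∈ Us ↔ x ∈ A ∪ B)
    {T : Finset (Fin n)} (hTc : T.card = t) (hTcl : G.IsClique (T : Set (Fin n)))
    {v : Fin n} (hv : v ∈ B) (hvT : T ∩ Us = {v}) :
    ∑ C ∈ univ.filter (fun C => T.erase v ⊆ C ∧ C ∩ Us = ∅),
      ((Us.card : ℝ)⁻¹ * ∑ u ∈ Us, g (insert u C)) = 1 := by
  have hvT' : v ∈ T ∧ v ∈ Us := Finset.mem_inter.mp (hvT ▸ Finset.mem_singleton_self v)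
  have hT'U : T.erase v ∩ Us = ∅ := by
    ext x
    simp only [Finset.mem_inter, Finset.mem_erase, Finset.notMem_empty, iff_false, not_and]
    rintro ⟨hne, hxT⟩ hxU
    have : x ∈ T ∩ Us := Finset.mem_inter.mpr ⟨hxT, hxU⟩
    rw [hvT] at this
    exact hne (Finset.mem_singleton.mp this)
  have hT'mem : ∀ x ∈ T.erase v, x ∉ A ∪ B := by
    intro x hx hxU
    have : x ∈ T.erase v ∩ Us := Finset.mem_inter.mpr ⟨hx, (hUs x).mpr hxU⟩
    rw [hT'U] at this
    exact absurd this (Finset.notMem_empty x)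
  have key : ∀ u ∈ Us,
      ∑ C ∈ univ.filter (fun C => T.erase v ⊆ C ∧ C ∩ Us = ∅), g (insert u C) = 1 := by
    intro u hu
    rw [← sum_singleton_fiber Us g hu (T.erase v) hT'U]
    have hu' : u ∉ T.erase v := by
      intro h
      have : u ∈ T.erase v ∩ Us := Finset.mem_inter.mpr ⟨h, hu⟩
      rw [hT'U] at this
      exact absurd this (Finset.notMem_empty u)
    have ht1 : 1 ≤ t := by
      rw [← hTc]
      exact Finset.card_pos.mpr ⟨v, hvT'.1⟩
    have hcard : (insert u (T.erase v)).card = t := by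
      rw [Finset.card_insert_of_notMem hu', Finset.card_erase_of_mem hvT'.1, hTc]
      omega
    have hclique : (symmetrize G A B).IsClique ((insert u (T.erase v) : Finset (Fin n)) : Set (Fin n)) := by
      rw [clique_insert hB ((hUs u).mp hu) hv hT'mem, Finset.insert_erase hvT'.1]
      exact hTcl
    rw [← hg.2.2 _ hcard hclique]
    apply Finset.sum_subset
    · intro K hK
      simp only [Finset.mem_filter, Finset.mem_univ, true_and] at hK ⊢
      have huK : u ∈ K := by
        have : u ∈ K ∩ Us := hK.2 ▸ Finset.mem_singleton_self u
        exact (Finset.mem_inter.mp this).1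
      exact Finset.insert_subset huK hK.1
    · intro K hK hK2
      simp only [Finset.mem_filter, Finset.mem_univ, true_and] at hK hK2
      have hsub := Finset.insert_subset_iff.mp hK
      have hne : ¬ (K ∩ Us = {u}) := fun h => hK2 ⟨hsub.2, h⟩
      apply decomp_vanish_two hg hUs
      have huK : u ∈ K ∩ Us := Finset.mem_inter.mpr ⟨hsub.1, hu⟩
      rcases Nat.lt_or_ge (K ∩ Us).card 2 with h2 | h2
      · exfalso
        have h1 : 1 ≤ (K ∩ Us).card := Finset.card_pos.mpr ⟨u, huK⟩
        have : (K ∩ Us).card = 1 := by omega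
        obtain ⟨w, hw⟩ := Finset.card_eq_one.mp this
        rw [hw] at huK
        have := Finset.mem_singleton.mp huK
        exact hne (by rwa [← this] at hw)
      · exact h2
  calc ∑ C ∈ univ.filter (fun C => T.erase v ⊆ C ∧ C ∩ Us = ∅),
        ((Us.card : ℝ)⁻¹ * ∑ u ∈ Us, g (insert u C))
      = (Us.card : ℝ)⁻¹ * ∑ C ∈ univ.filter (fun C => T.erase v ⊆ C ∧ C ∩ Us = ∅),
          ∑ u ∈ Us, g (insert u C) := by rw [Finset.mul_sum]
    _ = (Us.card : ℝ)⁻¹ * ∑ u ∈ Us,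
          ∑ C ∈ univ.filter (fun C => T.erase v ⊆ C ∧ C ∩ Us = ∅), g (insert u C) := by
          rw [Finset.sum_comm]
    _ = (Us.card : ℝ)⁻¹ * ∑ u ∈ Us, (1 : ℝ) := by
          rw [Finset.sum_congr rfl key]
    _ = 1 := by
          rw [Finset.sum_const, nsmul_eq_mul, mul_one]
          have : Us.card ≠ 0 := Finset.card_ne_zero_of_mem hvT'.2
          field_simp

lemma cost_split {V : Type} [Fintype V] [DecidableEq V] (c : ℕ → ℝ) (Us : Finset V)
    (g : Finset V → ℝ) (hg : ∀ K : Finset V, 2 ≤ (K ∩ Us).card → g K = 0) :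
    cliqueCost c g = ∑ C ∈ univ.filter (fun C => C ∩ Us = ∅), c C.card * g C
      + ∑ u ∈ Us, ∑ C ∈ univ.filter (fun C => C ∩ Us = ∅), c (C.card + 1) * g (insert u C) := by
  have h := sum_split Us (fun K => c K.card * g K)
    (fun K hK => by rw [hg K hK, mul_zero]) ∅ (by simp)
  simp only [Finset.empty_subset, true_and, Finset.filter_true] at h
  rw [cliqueCost, h]
  congr 1
  refine Finset.sum_congr rfl fun u hu => Finset.sum_congr rfl fun C hC => ?_
  simp only [Finset.mem_filter, Finset.mem_univ, true_and] at hC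
  have huC : u ∉ C := by
    intro h'
    have : u ∈ C ∩ Us := Finset.mem_inter.mpr ⟨h', hu⟩
    rw [hC] at this
    exact absurd this (Finset.notMem_empty u)
  rw [Finset.card_insert_of_notMem huC]

end AuxDecomp
/-- Lemma 2.1 (decomposition part): symmetrizing one clone class onto the other
does not decrease the fractional `t`-clique decomposition number, for at least
one of the two directions. -/
theorem stmt9 (t : ℕ) (ht : 1 ≤ t) (c : ℕ → ℝ) (hc : ∀ i, 1 ≤ i → 0 ≤ c i)
    (n : ℕ) (G : SimpleGraph (Fin n)) (V₀ V₁ : Set (Fin n))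
    (h₀ : IsCloneSet G V₀) (h₁ : IsCloneSet G V₁) (hdisj : Disjoint V₀ V₁)
    (hind : ∀ u ∈ V₀ ∪ V₁, ∀ v ∈ V₀ ∪ V₁, ¬ G.Adj u v) :
    piFrac t G c ≤
      max (piFrac t (symmetrize G V₀ V₁) c) (piFrac t (symmetrize G V₁ V₀) c) := by
  have hind' : ∀ u ∈ V₁ ∪ V₀, ∀ v ∈ V₁ ∪ V₀, ¬ G.Adj u v := by
    rw [Set.union_comm]; exact hind
  set H1 := symmetrize G V₀ V₁ with hH1
  set H0 := symmetrize G V₁ V₀ with hH0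
  set M := max (piFrac t H1 c) (piFrac t H0 c) with hM
  set Us : Finset (Fin n) := univ.filter (fun x => x ∈ V₀ ∪ V₁) with hUsdef
  have hUs : ∀ x, x ∈ Us ↔ x ∈ V₀ ∪ V₁ := by intro x; simp [hUsdef]
  have hUs' : ∀ x, x ∈ Us ↔ x ∈ V₁ ∪ V₀ := by
    intro x; rw [Set.union_comm]; exact hUs x
  set F0 : Finset (Fin n) := univ.filter (fun x => x ∈ V₀) with hF0def
  set F1 : Finset (Fin n) := univ.filter (fun x => x ∈ V₁) with hF1def
  have hF0 : ∀ x, x ∈ F0 ↔ x ∈ V₀ := by intro x; simp [hF0def]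
  have hF1 : ∀ x, x ∈ F1 ↔ x ∈ V₁ := by intro x; simp [hF1def]
  have hUsF : Us = F0 ∪ F1 := by
    ext x
    rw [hUs x, Finset.mem_union, hF0 x, hF1 x]
    exact Set.mem_union x V₀ V₁
  have hdisjF : Disjoint F0 F1 := by
    rw [Finset.disjoint_left]
    intro a h0 h1
    exact Set.disjoint_left.mp hdisj ((hF0 a).mp h0) ((hF1 a).mp h1)
  have hmsum : Us.card = F0.card + F1.card := by
    rw [hUsF, Finset.card_union_of_disjoint hdisjF]
  obtain ⟨v0ex, hv0ex⟩ := h₀.1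
  have hm0pos : 0 < F0.card := Finset.card_pos.mpr ⟨v0ex, (hF0 v0ex).mpr hv0ex⟩
  obtain ⟨v1ex, hv1ex⟩ := h₁.1
  have hm1pos : 0 < F1.card := Finset.card_pos.mpr ⟨v1ex, (hF1 v1ex).mpr hv1ex⟩
  have hmpos : 0 < Us.card := by omega
  have hmR : (0 : ℝ) < (Us.card : ℝ) := by exact_mod_cast hmpos
  have hmsumR : (Us.card : ℝ) = (F0.card : ℝ) + (F1.card : ℝ) := by exact_mod_cast hmsum
  have hsplitU : ∀ g : Fin n → ℝ, ∑ u ∈ Us, g u = ∑ u ∈ F0, g u + ∑ u ∈ F1, g u := by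
    intro g
    rw [hUsF, Finset.sum_union hdisjF]
  have claim : ∀ ε : ℝ, 0 < ε → piFrac t G c ≤ M + ε := by
    intro ε hε
    have hS1ne : {x | ∃ f, IsFracDecomp t H1 f ∧ x = cliqueCost c f}.Nonempty := by
      obtain ⟨f, hf⟩ := exists_decomp t ht H1
      exact ⟨_, f, hf, rfl⟩
    have hS0ne : {x | ∃ f, IsFracDecomp t H0 f ∧ x = cliqueCost c f}.Nonempty := by
      obtain ⟨f, hf⟩ := exists_decomp t ht H0
      exact ⟨_, f, hf, rfl⟩
    obtain ⟨x1, hx1mem, hx1⟩ := Real.lt_sInf_add_pos hS1ne hε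
    obtain ⟨f1, hf1, rfl⟩ := hx1mem
    obtain ⟨x0, hx0mem, hx0⟩ := Real.lt_sInf_add_pos hS0ne hε
    obtain ⟨f0, hf0, rfl⟩ := hx0mem
    have hpi1 : sInf {x | ∃ f, IsFracDecomp t H1 f ∧ x = cliqueCost c f} = piFrac t H1 c := rfl
    have hpi0 : sInf {x | ∃ f, IsFracDecomp t H0 f ∧ x = cliqueCost c f} = piFrac t H0 c := rfl
    rw [hpi1] at hx1
    rw [hpi0] at hx0
    have hv1two : ∀ K, 2 ≤ (K ∩ Us).card → f1 K = 0 := decomp_vanish_two hf1 hUs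
    have hv0two : ∀ K, 2 ≤ (K ∩ Us).card → f0 K = 0 := decomp_vanish_two hf0 hUs'
    set b1 : Finset (Fin n) → ℝ :=
      fun C => (Us.card : ℝ)⁻¹ * ∑ u ∈ Us, f1 (insert u C) with hb1
    set b0 : Finset (Fin n) → ℝ :=
      fun C => (Us.card : ℝ)⁻¹ * ∑ u ∈ Us, f0 (insert u C) with hb0
    set f : Finset (Fin n) → ℝ := fun K =>
      if K ∩ Us = ∅ then
        (F1.card : ℝ) / Us.card * f1 K + (F0.card : ℝ) / Us.card * f0 K
      else if K ∩ Us ⊆ F1 ∧ (K ∩ Us).card = 1 then b1 (K \ Us)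
      else if K ∩ Us ⊆ F0 ∧ (K ∩ Us).card = 1 then b0 (K \ Us)
      else 0 with hfdef
    have hfE0 : ∀ K, K ∩ Us = ∅ →
        f K = (F1.card : ℝ) / Us.card * f1 K + (F0.card : ℝ) / Us.card * f0 K := by
      intro K h
      simp only [hfdef]
      rw [if_pos h]
    have hfE1 : ∀ K v, v ∈ F1 → K ∩ Us = {v} → f K = b1 (K \ Us) := by
      intro K v hv h
      simp only [hfdef]
      rw [if_neg (by simp [h]), if_pos ⟨by rw [h, Finset.singleton_subset_iff]; exact hv,
        by rw [h]; exact Finset.card_singleton v⟩]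
    have hfE0' : ∀ K v, v ∈ F0 → K ∩ Us = {v} → f K = b0 (K \ Us) := by
      intro K v hv h
      simp only [hfdef]
      rw [if_neg (by simp [h]), if_neg, if_pos ⟨by rw [h, Finset.singleton_subset_iff]; exact hv,
        by rw [h]; exact Finset.card_singleton v⟩]
      rintro ⟨hsub, -⟩
      rw [h, Finset.singleton_subset_iff] at hsub
      exact Finset.disjoint_left.mp hdisjF hv hsub
    have hfE2 : ∀ K, 2 ≤ (K ∩ Us).card → f K = 0 := by
      intro K h
      simp only [hfdef]
      have h1 : ¬ (K ∩ Us = ∅) := by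
        intro hc'
        rw [hc'] at h
        simp at h
      have h2 : ¬ (K ∩ Us ⊆ F1 ∧ (K ∩ Us).card = 1) := fun hc' => by omega
      have h3 : ¬ (K ∩ Us ⊆ F0 ∧ (K ∩ Us).card = 1) := fun hc' => by omega
      rw [if_neg h1, if_neg h2, if_neg h3]
    have hfnn : ∀ K, 0 ≤ f K := by
      intro K
      simp only [hfdef]
      have hq1 : (0:ℝ) ≤ (F1.card : ℝ) / Us.card :=
        div_nonneg (Nat.cast_nonneg _) (Nat.cast_nonneg _)
      have hq0 : (0:ℝ) ≤ (F0.card : ℝ) / Us.card :=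
        div_nonneg (Nat.cast_nonneg _) (Nat.cast_nonneg _)
      have hqi : (0:ℝ) ≤ (Us.card : ℝ)⁻¹ := inv_nonneg.mpr (Nat.cast_nonneg _)
      split_ifs with h1 h2 h3
      · exact add_nonneg (mul_nonneg hq1 (hf1.1 K)) (mul_nonneg hq0 (hf0.1 K))
      · exact mul_nonneg hqi (Finset.sum_nonneg fun u _ => hf1.1 _)
      · exact mul_nonneg hqi (Finset.sum_nonneg fun u _ => hf0.1 _)
      · exact le_refl 0
    have hfsupp : ∀ K, ¬ IsCliqueOf G K → f K = 0 := by
      intro K hK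
      rcases Nat.lt_or_ge (K ∩ Us).card 2 with hlt | hge
      swap
      · exact hfE2 K hge
      by_cases hE : K ∩ Us = ∅
      · rw [hfE0 K hE]
        have hmem : ∀ x ∈ K, x ∉ V₀ ∪ V₁ := by
          intro x hx hxU
          have : x ∈ K ∩ Us := Finset.mem_inter.mpr ⟨hx, (hUs x).mpr hxU⟩
          rw [hE] at this
          exact absurd this (Finset.notMem_empty x)
        have hmem' : ∀ x ∈ K, x ∉ V₁ ∪ V₀ := by
          intro x hx
          rw [Set.union_comm]
          exact hmem x hx
        have hf1z : f1 K = 0 := hf1.2.1 K (by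
          rintro ⟨hne, hcl⟩
          exact hK ⟨hne, (clique_out hmem).mp hcl⟩)
        have hf0z : f0 K = 0 := hf0.2.1 K (by
          rintro ⟨hne, hcl⟩
          exact hK ⟨hne, (clique_out hmem').mp hcl⟩)
        rw [hf1z, hf0z]
        ring
      · have hc1 : (K ∩ Us).card = 1 := by
          have : 1 ≤ (K ∩ Us).card :=
            Finset.card_pos.mpr (Finset.nonempty_iff_ne_empty.mpr hE)
          omega
        obtain ⟨v, hv⟩ := Finset.card_eq_one.mp hc1
        have hvK : v ∈ K ∧ v ∈ Us := Finset.mem_inter.mp (hv ▸ Finset.mem_singleton_self v)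
        have hmem : ∀ x ∈ K \ Us, x ∉ V₀ ∪ V₁ := by
          intro x hx hxU
          exact (Finset.mem_sdiff.mp hx).2 ((hUs x).mpr hxU)
        have hmem' : ∀ x ∈ K \ Us, x ∉ V₁ ∪ V₀ := by
          intro x hx
          rw [Set.union_comm]
          exact hmem x hx
        have hKeq : insert v (K \ Us) = K := aux_insert_back hv
        rcases (hUs v).mp hvK.2 with hv0 | hv1
        · rw [hfE0' K v ((hF0 v).mpr hv0) hv]
          simp only [hb0]
          apply mul_eq_zero_of_right
          apply Finset.sum_eq_zero
          intro u hu
          apply hf0.2.1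
          rintro ⟨-, hcl⟩
          apply hK
          refine ⟨⟨v, hvK.1⟩, ?_⟩
          have := (clique_insert (A := V₁) (B := V₀) h₀ ((hUs' u).mp hu) hv0 hmem').mp hcl
          rwa [hKeq] at this
        · rw [hfE1 K v ((hF1 v).mpr hv1) hv]
          simp only [hb1]
          apply mul_eq_zero_of_right
          apply Finset.sum_eq_zero
          intro u hu
          apply hf1.2.1
          rintro ⟨-, hcl⟩
          apply hK
          refine ⟨⟨v, hvK.1⟩, ?_⟩
          have := (clique_insert (A := V₀) (B := V₁) h₁ ((hUs u).mp hu) hv1 hmem).mp hcl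
          rwa [hKeq] at this
    have hconstraint : ∀ T : Finset (Fin n), T.card = t → G.IsClique (T : Set (Fin n)) →
        ∑ K ∈ univ.filter (fun K => T ⊆ K), f K = 1 := by
      intro T hTc hTcl
      have hcard1 : (T ∩ Us).card ≤ 1 := G_clique_inter_card hind hTcl hUs
      by_cases hTU : T ∩ Us = ∅
      · rw [sum_split Us f hfE2 T hTU]
        have hSfact : ∀ C ∈ univ.filter (fun C => T ⊆ C ∧ C ∩ Us = ∅), C ∩ Us = ∅ := by
          intro C hC
          exact (Finset.mem_filter.mp hC).2.2
        have e1 : ∑ K ∈ univ.filter (fun C => T ⊆ C ∧ C ∩ Us = ∅), f K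
            = (F1.card : ℝ) / Us.card * ∑ C ∈ univ.filter (fun C => T ⊆ C ∧ C ∩ Us = ∅), f1 C
              + (F0.card : ℝ) / Us.card
                * ∑ C ∈ univ.filter (fun C => T ⊆ C ∧ C ∩ Us = ∅), f0 C := by
          rw [Finset.mul_sum, Finset.mul_sum, ← Finset.sum_add_distrib]
          exact Finset.sum_congr rfl fun C hC => hfE0 C (hSfact C hC)
        have e2 : ∑ u ∈ F1, ∑ C ∈ univ.filter (fun C => T ⊆ C ∧ C ∩ Us = ∅), f (insert u C)
            = (F1.card : ℝ) * ∑ C ∈ univ.filter (fun C => T ⊆ C ∧ C ∩ Us = ∅), b1 C := by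
          have inner : ∀ u ∈ F1,
              ∑ C ∈ univ.filter (fun C => T ⊆ C ∧ C ∩ Us = ∅), f (insert u C)
              = ∑ C ∈ univ.filter (fun C => T ⊆ C ∧ C ∩ Us = ∅), b1 C := by
            intro u hu
            refine Finset.sum_congr rfl fun C hC => ?_
            have huUs : u ∈ Us := by rw [hUsF]; exact Finset.mem_union_right F0 hu
            have hCU := hSfact C hC
            rw [hfE1 (insert u C) u hu (aux_insert_inter huUs hCU),
              aux_insert_sdiff huUs hCU]
          rw [Finset.sum_congr rfl inner, Finset.sum_const, nsmul_eq_mul]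
        have e3 : ∑ u ∈ F0, ∑ C ∈ univ.filter (fun C => T ⊆ C ∧ C ∩ Us = ∅), f (insert u C)
            = (F0.card : ℝ) * ∑ C ∈ univ.filter (fun C => T ⊆ C ∧ C ∩ Us = ∅), b0 C := by
          have inner : ∀ u ∈ F0,
              ∑ C ∈ univ.filter (fun C => T ⊆ C ∧ C ∩ Us = ∅), f (insert u C)
              = ∑ C ∈ univ.filter (fun C => T ⊆ C ∧ C ∩ Us = ∅), b0 C := by
            intro u hu
            refine Finset.sum_congr rfl fun C hC => ?_
            have huUs : u ∈ Us := by rw [hUsF]; exact Finset.mem_union_left F1 hu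
            have hCU := hSfact C hC
            rw [hfE0' (insert u C) u hu (aux_insert_inter huUs hCU),
              aux_insert_sdiff huUs hCU]
          rw [Finset.sum_congr rfl inner, Finset.sum_const, nsmul_eq_mul]
        have e4 : ∑ C ∈ univ.filter (fun C => T ⊆ C ∧ C ∩ Us = ∅), b1 C
            = (Us.card : ℝ)⁻¹ * ∑ u ∈ Us,
                ∑ C ∈ univ.filter (fun C => T ⊆ C ∧ C ∩ Us = ∅), f1 (insert u C) := by
          simp only [hb1]
          rw [← Finset.mul_sum, Finset.sum_comm]
        have e5 : ∑ C ∈ univ.filter (fun C => T ⊆ C ∧ C ∩ Us = ∅), b0 C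
            = (Us.card : ℝ)⁻¹ * ∑ u ∈ Us,
                ∑ C ∈ univ.filter (fun C => T ⊆ C ∧ C ∩ Us = ∅), f0 (insert u C) := by
          simp only [hb0]
          rw [← Finset.mul_sum, Finset.sum_comm]
        have hA1 := empty_case_sum hf1 hUs hTc hTcl hTU
        have hA0 := empty_case_sum hf0 hUs' hTc hTcl hTU
        rw [e1, hsplitU (fun u => ∑ C ∈ univ.filter (fun C => T ⊆ C ∧ C ∩ Us = ∅),
          f (insert u C)), e2, e3, e4, e5]
        set P1 := ∑ C ∈ univ.filter (fun C => T ⊆ C ∧ C ∩ Us = ∅), f1 C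
        set P0 := ∑ C ∈ univ.filter (fun C => T ⊆ C ∧ C ∩ Us = ∅), f0 C
        set D1 := ∑ u ∈ Us, ∑ C ∈ univ.filter (fun C => T ⊆ C ∧ C ∩ Us = ∅), f1 (insert u C)
        set D0 := ∑ u ∈ Us, ∑ C ∈ univ.filter (fun C => T ⊆ C ∧ C ∩ Us = ∅), f0 (insert u C)
        have hD1 : D1 = 1 - P1 := by linarith
        have hD0 : D0 = 1 - P0 := by linarith
        have hne : (Us.card : ℝ) ≠ 0 := ne_of_gt hmR
        have hmi : (Us.card : ℝ) * (Us.card : ℝ)⁻¹ = 1 := mul_inv_cancel₀ hne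
        rw [hD1, hD0]
        linear_combination (-(Us.card : ℝ)⁻¹) * hmsumR + hmi
      · have hc1 : (T ∩ Us).card = 1 := by
          have : 1 ≤ (T ∩ Us).card :=
            Finset.card_pos.mpr (Finset.nonempty_iff_ne_empty.mpr hTU)
          omega
        obtain ⟨v, hv⟩ := Finset.card_eq_one.mp hc1
        have hvT : v ∈ T ∧ v ∈ Us := Finset.mem_inter.mp (hv ▸ Finset.mem_singleton_self v)
        have hT'U : T.erase v ∩ Us = ∅ := by
          ext x
          simp only [Finset.mem_inter, Finset.mem_erase, Finset.notMem_empty, iff_false,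
            not_and]
          rintro ⟨hne, hxT⟩ hxU
          have : x ∈ T ∩ Us := Finset.mem_inter.mpr ⟨hxT, hxU⟩
          rw [hv] at this
          exact hne (Finset.mem_singleton.mp this)
        have step1 : ∑ K ∈ univ.filter (fun K => T ⊆ K), f K
            = ∑ K ∈ univ.filter (fun K => T.erase v ⊆ K ∧ K ∩ Us = {v}), f K := by
          symm
          apply Finset.sum_subset
          · intro K hK
            simp only [Finset.mem_filter, Finset.mem_univ, true_and] at hK ⊢
            have hvK : v ∈ K := (Finset.mem_inter.mp
              (hK.2 ▸ Finset.mem_singleton_self v)).1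
            intro x hx
            rcases eq_or_ne x v with rfl | hne
            · exact hvK
            · exact hK.1 (Finset.mem_erase.mpr ⟨hne, hx⟩)
          · intro K hK hK2
            simp only [Finset.mem_filter, Finset.mem_univ, true_and] at hK hK2
            have hvK : v ∈ K ∩ Us := Finset.mem_inter.mpr ⟨hK hvT.1, hvT.2⟩
            have hne : ¬ (K ∩ Us = {v}) :=
              fun h => hK2 ⟨(Finset.erase_subset v T).trans hK, h⟩
            apply hfE2
            rcases Nat.lt_or_ge (K ∩ Us).card 2 with h2 | h2
            · exfalso
              have hp : 1 ≤ (K ∩ Us).card := Finset.card_pos.mpr ⟨v, hvK⟩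
              have : (K ∩ Us).card = 1 := by omega
              obtain ⟨w, hw⟩ := Finset.card_eq_one.mp this
              rw [hw] at hvK
              have := Finset.mem_singleton.mp hvK
              exact hne (by rwa [← this] at hw)
            · exact h2
        rw [step1, sum_singleton_fiber Us f hvT.2 (T.erase v) hT'U]
        rcases (hUs v).mp hvT.2 with hv0 | hv1
        · have hkey := single_case_sum (A := V₁) (B := V₀) h₀ hf0 hUs' hTc hTcl hv0 hv
          rw [← hkey]
          refine Finset.sum_congr rfl fun C hC => ?_
          simp only [Finset.mem_filter, Finset.mem_univ, true_and] at hC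
          rw [hfE0' (insert v C) v ((hF0 v).mpr hv0) (aux_insert_inter hvT.2 hC.2),
            aux_insert_sdiff hvT.2 hC.2]
        · have hkey := single_case_sum (A := V₀) (B := V₁) h₁ hf1 hUs hTc hTcl hv1 hv
          rw [← hkey]
          refine Finset.sum_congr rfl fun C hC => ?_
          simp only [Finset.mem_filter, Finset.mem_univ, true_and] at hC
          rw [hfE1 (insert v C) v ((hF1 v).mpr hv1) (aux_insert_inter hvT.2 hC.2),
            aux_insert_sdiff hvT.2 hC.2]
    -- cost computation
    have hcost1 := cost_split c Us f1 hv1two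
    have hcost0 := cost_split c Us f0 hv0two
    have hcostf := cost_split c Us f hfE2
    have ecost1 : ∑ C ∈ univ.filter (fun C => C ∩ Us = ∅), c C.card * f C
        = (F1.card : ℝ) / Us.card
            * ∑ C ∈ univ.filter (fun C => C ∩ Us = ∅), c C.card * f1 C
          + (F0.card : ℝ) / Us.card
            * ∑ C ∈ univ.filter (fun C => C ∩ Us = ∅), c C.card * f0 C := by
      rw [Finset.mul_sum, Finset.mul_sum, ← Finset.sum_add_distrib]
      refine Finset.sum_congr rfl fun C hC => ?_
      have hCU : C ∩ Us = ∅ := (Finset.mem_filter.mp hC).2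
      rw [hfE0 C hCU]
      ring
    have ecost2 : ∑ u ∈ Us, ∑ C ∈ univ.filter (fun C => C ∩ Us = ∅),
          c (C.card + 1) * f (insert u C)
        = (F1.card : ℝ) * ((Us.card : ℝ)⁻¹ * ∑ u ∈ Us,
            ∑ C ∈ univ.filter (fun C => C ∩ Us = ∅), c (C.card + 1) * f1 (insert u C))
          + (F0.card : ℝ) * ((Us.card : ℝ)⁻¹ * ∑ u ∈ Us,
            ∑ C ∈ univ.filter (fun C => C ∩ Us = ∅), c (C.card + 1) * f0 (insert u C)) := by
      have eq1 : ∀ u ∈ F1, ∑ C ∈ univ.filter (fun C => C ∩ Us = ∅),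
          c (C.card + 1) * f (insert u C)
          = ∑ C ∈ univ.filter (fun C => C ∩ Us = ∅), c (C.card + 1) * b1 C := by
        intro u hu
        refine Finset.sum_congr rfl fun C hC => ?_
        have huUs : u ∈ Us := by rw [hUsF]; exact Finset.mem_union_right F0 hu
        have hCU : C ∩ Us = ∅ := (Finset.mem_filter.mp hC).2
        rw [hfE1 (insert u C) u hu (aux_insert_inter huUs hCU), aux_insert_sdiff huUs hCU]
      have eq0 : ∀ u ∈ F0, ∑ C ∈ univ.filter (fun C => C ∩ Us = ∅),
          c (C.card + 1) * f (insert u C)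
          = ∑ C ∈ univ.filter (fun C => C ∩ Us = ∅), c (C.card + 1) * b0 C := by
        intro u hu
        refine Finset.sum_congr rfl fun C hC => ?_
        have huUs : u ∈ Us := by rw [hUsF]; exact Finset.mem_union_left F1 hu
        have hCU : C ∩ Us = ∅ := (Finset.mem_filter.mp hC).2
        rw [hfE0' (insert u C) u hu (aux_insert_inter huUs hCU), aux_insert_sdiff huUs hCU]
      have swap1 : ∑ C ∈ univ.filter (fun C => C ∩ Us = ∅), c (C.card + 1) * b1 C
          = (Us.card : ℝ)⁻¹ * ∑ u ∈ Us,
              ∑ C ∈ univ.filter (fun C => C ∩ Us = ∅), c (C.card + 1) * f1 (insert u C) := by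
        symm
        rw [Finset.sum_comm, Finset.mul_sum]
        refine Finset.sum_congr rfl fun C hC => ?_
        rw [← Finset.mul_sum]
        simp only [hb1]
        ring
      have swap0 : ∑ C ∈ univ.filter (fun C => C ∩ Us = ∅), c (C.card + 1) * b0 C
          = (Us.card : ℝ)⁻¹ * ∑ u ∈ Us,
              ∑ C ∈ univ.filter (fun C => C ∩ Us = ∅), c (C.card + 1) * f0 (insert u C) := by
        symm
        rw [Finset.sum_comm, Finset.mul_sum]
        refine Finset.sum_congr rfl fun C hC => ?_
        rw [← Finset.mul_sum]
        simp only [hb0]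
        ring
      rw [hsplitU (fun u => ∑ C ∈ univ.filter (fun C => C ∩ Us = ∅),
          c (C.card + 1) * f (insert u C)), Finset.sum_congr rfl eq1, Finset.sum_congr rfl eq0,
        Finset.sum_const, Finset.sum_const, nsmul_eq_mul, nsmul_eq_mul, swap1, swap0]
      ring
    have hkeycost : cliqueCost c f
        = ((F1.card : ℝ) * cliqueCost c f1 + (F0.card : ℝ) * cliqueCost c f0) / Us.card := by
      rw [hcostf, ecost1, ecost2, hcost1, hcost0]
      ring
    have h1' : cliqueCost c f1 ≤ M + ε := by
      have : piFrac t H1 c ≤ M := le_max_left _ _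
      linarith
    have h0' : cliqueCost c f0 ≤ M + ε := by
      have : piFrac t H0 c ≤ M := le_max_right _ _
      linarith
    have hcb : cliqueCost c f ≤ M + ε := by
      rw [hkeycost, div_le_iff₀ hmR]
      have t1 : (F1.card : ℝ) * cliqueCost c f1 ≤ (F1.card : ℝ) * (M + ε) :=
        mul_le_mul_of_nonneg_left h1' (Nat.cast_nonneg _)
      have t0 : (F0.card : ℝ) * cliqueCost c f0 ≤ (F0.card : ℝ) * (M + ε) :=
        mul_le_mul_of_nonneg_left h0' (Nat.cast_nonneg _)
      rw [hmsumR]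
      nlinarith [t1, t0]
    have hbdd : BddBelow {x | ∃ g, IsFracDecomp t G g ∧ x = cliqueCost c g} := by
      refine ⟨0, ?_⟩
      rintro x ⟨g, hg, rfl⟩
      exact decomp_cost_nonneg hc hg
    have hmemG : cliqueCost c f ∈ {x | ∃ g, IsFracDecomp t G g ∧ x = cliqueCost c g} :=
      ⟨f, ⟨hfnn, hfsupp, hconstraint⟩, rfl⟩
    have hpiG : piFrac t G c = sInf {x | ∃ g, IsFracDecomp t G g ∧ x = cliqueCost c g} := rfl
    calc piFrac t G c ≤ cliqueCost c f := by rw [hpiG]; exact csInf_le hbdd hmemG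
      _ ≤ M + ε := hcb
  by_contra hlt
  push_neg at hlt
  have := claim ((piFrac t G c - M) / 2) (by linarith)
  linarith
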